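/- Let k ≥ 2 be an even integer and let D be a k-quasi-transitive digraph. If P = (u = u_0, u_1, …, u_{k+1}, u_{k+2} = v) is a directed path in D of minimum length from u to v, i.e., d(u,v) = k+2, then d⁺(v) ≥ d⁺(u) + k. -/

import Mathlib

variable {V : Type*}

/-- A directed path of length `n` from `u` to `v` in the digraph with arc relation `A`:
a sequence of `n + 1` pairwise distinct vertices, consecutive ones joined by arcs. -/
def HasPathN (A : V → V → Prop) (u v : V) (n : ℕ) : Prop :=
  ∃ f : Fin (n + 1) → V, Function.Injective f ∧ f 0 = u ∧ f (Fin.last n) = v ∧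
    ∀ i : Fin n, A (f i.castSucc) (f i.succ)

/-- The distance from `u` to `v`: the length of a shortest directed path from `u` to `v`,
`⊤` if there is no such path. -/
noncomputable def ddist (A : V → V → Prop) (u v : V) : ℕ∞ :=
  sInf {n : ℕ∞ | ∃ m : ℕ, n = (m : ℕ∞) ∧ HasPathN A u v m}

/-- `D` is `k`-quasi-transitive if for every directed path `(v_0, …, v_k)` of length `k`,
either `(v_0, v_k)` or `(v_k, v_0)` is an arc. -/
def KQuasiTrans (A : V → V → Prop) (k : ℕ) : Prop :=
  ∀ u v : V, HasPathN A u v k → A u v ∨ A v u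

/-- A vertex `v` is an `r`-king if every vertex is within distance `r` from `v`. -/
def IsRKing (A : V → V → Prop) (r : ℕ) (v : V) : Prop :=
  ∀ u : V, ddist A v u ≤ (r : ℕ∞)

/-- `u` reaches `v` by a directed path. -/
def Reaches (A : V → V → Prop) (u v : V) : Prop :=
  ∃ n : ℕ, HasPathN A u v n

/-- A strong component: the set of all vertices mutually reachable with some vertex. -/
def IsStrongComponent (A : V → V → Prop) (S : Set V) : Prop :=
  ∃ v : V, S = {u | Reaches A u v ∧ Reaches A v u}

/-- An initial strong component: a strong component receiving no arcs from outside. -/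
def IsInitialStrongComponent (A : V → V → Prop) (S : Set V) : Prop :=
  IsStrongComponent A S ∧ ∀ u v : V, u ∉ S → v ∈ S → ¬ A u v

/-- The out-degree of `v` in `D`. -/
noncomputable def outDeg (A : V → V → Prop) (v : V) : ℕ :=
  {u : V | A v u}.ncard

/-- The out-degree of `v` in the subdigraph of `D` induced by `C`. -/
noncomputable def outDegIn (A : V → V → Prop) (C : Set V) (v : V) : ℕ :=
  {u ∈ C | A v u}.ncard

/-- The maximum out-degree of the subdigraph induced by `C`. -/
noncomputable def maxOutDegIn (A : V → V → Prop) (C : Set V) : ℕ :=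
  sSup (outDegIn A C '' C)

private lemma build_path {V : Type*} (A : V → V → Prop) (U : ℕ → V) (n : ℕ) (s : ℕ → ℕ) (x y : V)
    (hx : U (s 0) = x) (hy : U (s n) = y)
    (hinj : ∀ a b : ℕ, a ≤ n → b ≤ n → U (s a) = U (s b) → a = b)
    (harcs : ∀ i : ℕ, i < n → A (U (s i)) (U (s (i+1)))) :
    HasPathN A x y n := by
  subst hx hy
  refine ⟨fun i => U (s i.val), ?_, by simp, by simp, fun i => harcs i.val i.isLt⟩
  intro a b h
  exact Fin.ext (hinj a.val b.val (Nat.lt_succ_iff.mp a.isLt) (Nat.lt_succ_iff.mp b.isLt) h)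

/-- even `k ≥ 2`; if `(u = u_0, …, u_{k+2} = v)` is a shortest path (so
`d(u, v) = k+2`), then `d⁺(v) ≥ d⁺(u) + k`. -/
theorem kqt_even_degree_jump
    [Fintype V] (A : V → V → Prop) (hloop : ∀ v : V, ¬ A v v)
    (k : ℕ) (hk : 2 ≤ k) (hke : Even k) (hqt : KQuasiTrans A k)
    (f : Fin (k + 3) → V) (hinj : Function.Injective f)
    (harc : ∀ i : Fin (k + 2), A (f i.castSucc) (f i.succ))
    (hdist : ddist A (f 0) (f (Fin.last (k + 2))) = ((k : ℕ∞) + 2)) :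
    outDeg A (f 0) + k ≤ outDeg A (f (Fin.last (k + 2))) := by
  classical
  set U : ℕ → V := fun i => f ⟨min i (k+2), by omega⟩ with hU
  have hUeq : ∀ i (h : i < k+3), U i = f ⟨i, h⟩ := by
    intro i h
    simp only [hU]
    congr 1
    exact Fin.ext (by simp; omega)
  have hU0 : U 0 = f 0 := by
    rw [hUeq 0 (by omega)]; congr 1
  have hUv : U (k+2) = f (Fin.last (k+2)) := by
    rw [hUeq (k+2) (by omega)]; rfl
  have hUinj : ∀ a b : ℕ, a ≤ k+2 → b ≤ k+2 → U a = U b → a = b := by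
    intro a b ha hb h
    rw [hUeq a (by omega), hUeq b (by omega)] at h
    simpa using congrArg Fin.val (hinj h)
  have harc' : ∀ m, m < k+2 → A (U m) (U (m+1)) := by
    intro m hm
    rw [hUeq m (by omega), hUeq (m+1) (by omega)]
    exact harc ⟨m, hm⟩
  have L1 : ∀ m, HasPathN A (U 0) (U (k+2)) m → k+2 ≤ m := by
    intro m hp
    rw [hU0, hUv] at hp
    have hle : ddist A (f 0) (f (Fin.last (k+2))) ≤ (m : ℕ∞) := sInf_le ⟨m, rfl, hp⟩
    rw [hdist] at hle
    have h2 : ((k+2 : ℕ) : ℕ∞) ≤ ((m : ℕ) : ℕ∞) := by push_cast; exact hle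
    exact_mod_cast h2
  -- no shortcut from u_0
  have hno0 : ∀ c, 2 ≤ c → c ≤ k+2 → ¬ A (U 0) (U c) := by
    intro c h2 hc hA
    have hp := build_path A U (k+3-c) (fun m => if m = 0 then 0 else c + m - 1)
      (U 0) (U (k+2)) (by norm_num)
      (by simp only [if_neg (show ¬ k+3-c = 0 by omega)]; congr 1; omega)
      ?_ ?_
    · have := L1 _ hp; omega
    · intro a b ha hb h
      have hv : ∀ m : ℕ, m ≤ k+3-c → (if m = 0 then 0 else c + m - 1) ≤ k+2 := by
        intro m hm; split_ifs <;> omega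
      have := hUinj _ _ (hv a ha) (hv b hb) h
      split_ifs at this <;> omega
    · intro i hi
      by_cases h0 : i = 0
      · subst h0
        simp only [if_pos rfl, if_neg (by omega : ¬ (0:ℕ)+1 = 0)]
        have : c + (0+1) - 1 = c := by omega
        rw [this]; exact hA
      · simp only [if_neg h0, if_neg (by omega : ¬ i+1 = 0)]
        have e1 : c + (i+1) - 1 = (c + i - 1) + 1 := by omega
        rw [e1]
        exact harc' _ (by omega)
  -- no shortcut into v
  have hnov : ∀ c, c ≤ k → ¬ A (U c) (U (k+2)) := by
    intro c hc hA
    have hp := build_path A U (c+1) (fun m => if m = c+1 then k+2 else m)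
      (U 0) (U (k+2)) (by norm_num) (by norm_num) ?_ ?_
    · have := L1 _ hp; omega
    · intro a b ha hb h
      have hv : ∀ m : ℕ, m ≤ c+1 → (if m = c+1 then k+2 else m) ≤ k+2 := by
        intro m hm; split_ifs <;> omega
      have := hUinj _ _ (hv a ha) (hv b hb) h
      split_ifs at this <;> omega
    · intro i hi
      by_cases hc' : i = c
      · subst hc'
        simp only [if_neg (by omega : ¬ i = i+1), if_pos rfl]
        exact hA
      · simp only [if_neg (by omega : ¬ i = c+1), if_neg (by omega : ¬ i+1 = c+1)]
        exact harc' _ (by omega)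
  -- u_k → u_0
  have hk0 : A (U k) (U 0) := by
    have hp : HasPathN A (U 0) (U k) k :=
      build_path A U k (fun m => m) _ _ rfl rfl
        (fun a b ha hb h => hUinj a b (by omega) (by omega) h)
        (fun i hi => harc' i (by omega))
    exact (hqt _ _ hp).resolve_left (hno0 k hk (by omega))

  have hS : ∀ i, i ≤ k → A (U (k+2)) (U i) := by
    -- v → u_2
    have hS2 : A (U (k+2)) (U 2) := by
      have hp : HasPathN A (U 2) (U (k+2)) k :=
        build_path A U k (fun m => m + 2) _ _ rfl rfl
          (fun a b ha hb h => by have := hUinj (a+2) (b+2) (by omega) (by omega) h; omega)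
          (fun i hi => harc' (i+2) (by omega))
      exact (hqt _ _ hp).resolve_left (hnov 2 hk)
    -- step down by 2
    have step_down : ∀ j, 2 ≤ j → j ≤ k → A (U (k+2)) (U j) → A (U (k+2)) (U (j-2)) := by
      intro j h2 hjk hA
      have hp : HasPathN A (U (k+2)) (U (j-2)) k := by
        refine build_path A U k
          (fun m => if m = 0 then k+2 else if m ≤ k+1-j then j+m-1 else m-(k+2-j)) _ _
          (by norm_num)
          (by simp only [if_neg (show ¬ k = 0 by omega), if_neg (show ¬ k ≤ k+1-j by omega)]
              congr 1; omega)
          ?_ ?_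
        · intro a b ha hb h
          have hv : ∀ m : ℕ, m ≤ k → (if m = 0 then k+2 else if m ≤ k+1-j then j+m-1 else m-(k+2-j)) ≤ k+2 := by
            intro m hm; split_ifs <;> omega
          have := hUinj _ _ (hv a ha) (hv b hb) h
          split_ifs at this <;> omega
        · intro i hi
          by_cases h0 : i = 0
          · subst h0
            simp only [if_pos rfl, if_neg (show ¬ (0:ℕ)+1 = 0 by omega),
              if_pos (show (0:ℕ)+1 ≤ k+1-j by omega)]
            have : j + (0+1) - 1 = j := by omega
            rw [this]; exact hA
          · by_cases hcons : i + 1 ≤ k+1-j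
            · simp only [if_neg h0, if_pos (show i ≤ k+1-j by omega), if_neg (show ¬ i+1 = 0 by omega),
                if_pos hcons]
              have e1 : j + (i+1) - 1 = (j + i - 1) + 1 := by omega
              rw [e1]; exact harc' _ (by omega)
            · by_cases hmid : i = k+1-j
              · have e1 : (if i = 0 then k+2 else if i ≤ k+1-j then j+i-1 else i-(k+2-j)) = k := by
                  rw [if_neg h0, if_pos (by omega)]; omega
                have e2 : (if i+1 = 0 then k+2 else if i+1 ≤ k+1-j then j+(i+1)-1 else (i+1)-(k+2-j)) = 0 := by
                  rw [if_neg (by omega), if_neg hcons]; omega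
                try simp only []
                rw [e1, e2]; exact hk0
              · simp only [if_neg h0, if_neg (show ¬ i ≤ k+1-j by omega),
                  if_neg (show ¬ i+1 = 0 by omega), if_neg hcons]
                have e1 : (i+1)-(k+2-j) = (i-(k+2-j)) + 1 := by omega
                rw [e1]; exact harc' _ (by omega)
      exact (hqt _ _ hp).resolve_right (hnov (j-2) (by omega))
    -- from v→u_j (j ≤ 1) to v→u_{j+k-1}
    have stepB : ∀ j, j ≤ 1 → A (U (k+2)) (U j) → A (U (k+2)) (U (j+k-1)) := by
      intro j hj hA
      have hp : HasPathN A (U (k+2)) (U (j+k-1)) k := by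
        refine build_path A U k (fun m => if m = 0 then k+2 else j+m-1) _ _
          (by norm_num)
          (by simp only [if_neg (show ¬ k = 0 by omega)])
          ?_ ?_
        · intro a b ha hb h
          have hv : ∀ m : ℕ, m ≤ k → (if m = 0 then k+2 else j+m-1) ≤ k+2 := by
            intro m hm; split_ifs <;> omega
          have := hUinj _ _ (hv a ha) (hv b hb) h
          split_ifs at this <;> omega
        · intro i hi
          by_cases h0 : i = 0
          · subst h0
            simp only [if_pos rfl, if_neg (show ¬ (0:ℕ)+1 = 0 by omega)]
            have : j + (0+1) - 1 = j := by omega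
            rw [this]; exact hA
          · simp only [if_neg h0, if_neg (show ¬ i+1 = 0 by omega)]
            have e1 : j + (i+1) - 1 = (j + i - 1) + 1 := by omega
            rw [e1]; exact harc' _ (by omega)
      exact (hqt _ _ hp).resolve_right (hnov (j+k-1) (by omega))
    -- descend arbitrarily by steps of 2
    have desc : ∀ d j, 2*d ≤ j → j ≤ k → A (U (k+2)) (U j) → A (U (k+2)) (U (j - 2*d)) := by
      intro d
      induction d with
      | zero => intro j _ _ hA; simpa using hA
      | succ d ih =>
        intro j hd hjk hA
        have h1 := step_down j (by omega) hjk hA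
        have h2 := ih (j-2) (by omega) (by omega) h1
        have : j - 2 - 2*d = j - 2*(d+1) := by omega
        rwa [this] at h2
    have desc' : ∀ j, j ≤ k → A (U (k+2)) (U j) → ∀ i, i ≤ j → (j - i) % 2 = 0 → A (U (k+2)) (U i) := by
      intro j hjk hA i hij hpar
      have := desc ((j-i)/2) j (by omega) hjk hA
      have e : j - 2*((j-i)/2) = i := by omega
      rwa [e] at this
    -- assemble
    have h0 : A (U (k+2)) (U 0) := by
      have := step_down 2 le_rfl hk hS2
      simpa using this
    have hk1 : A (U (k+2)) (U (k-1)) := by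
      have := stepB 0 (by omega) h0
      have e : 0 + k - 1 = k - 1 := by omega
      rwa [e] at this
    have hkpar : k % 2 = 0 := Nat.even_iff.mp hke
    have h1 : A (U (k+2)) (U 1) := desc' (k-1) (by omega) hk1 1 (by omega) (by omega)
    have hkk : A (U (k+2)) (U k) := by
      have := stepB 1 le_rfl h1
      have e : 1 + k - 1 = k := by omega
      rwa [e] at this
    intro i hi
    rcases Nat.even_or_odd i with he | ho
    · exact desc' k le_rfl hkk i hi (by have := Nat.even_iff.mp he; omega)
    · exact desc' (k-1) (by omega) hk1 i (by have := Nat.odd_iff.mp ho; omega)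
        (by have := Nat.odd_iff.mp ho; omega)
  have hW : ∀ w, A (U 0) w → w ≠ U 1 → A (U (k+2)) w := by
    intro w hw hw1
    -- w is distinct from all path vertices
    have hwne : ∀ c, c ≤ k+2 → w ≠ U c := by
      intro c hc he
      rcases Nat.lt_or_ge c 2 with h2 | h2
      · interval_cases c
        · exact hloop (U 0) (he ▸ hw)
        · exact hw1 he
      · exact hno0 c h2 hc (he ▸ hw)
    set Uw : ℕ → V := fun i => if i = k+3 then w else U i with hUw
    have hUwv : ∀ c, c ≤ k+2 → Uw c = U c := fun c hc => if_neg (by omega)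
    have hUww : Uw (k+3) = w := if_pos rfl
    have hUwinj : ∀ a b : ℕ, a ≤ k+3 → b ≤ k+3 → Uw a = Uw b → a = b := by
      intro a b ha hb h
      simp only [hUw] at h
      split_ifs at h with h1 h2 h2
      · omega
      · exact absurd (h ▸ hwne b (by omega)) (fun hh => hh rfl)
      · exact absurd ((h.symm ▸ hwne a (by omega))) (fun hh => hh rfl)
      · exact hUinj a b (by omega) (by omega) h
    -- ¬ A w v  (else u0, w, v is a path of length 2)
    have hnwv : ¬ A w (U (k+2)) := by
      intro hA
      have hp : HasPathN A (U 0) (U (k+2)) 2 := by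
        refine build_path A Uw 2 (fun m => if m = 0 then 0 else if m = 1 then k+3 else k+2) _ _
          (by simp only [if_pos rfl]; exact hUwv 0 (by omega))
          (by simp only [if_neg (show ¬ (2:ℕ) = 0 by omega), if_neg (show ¬ (2:ℕ) = 1 by omega)]
              exact hUwv (k+2) le_rfl)
          ?_ ?_
        · intro a b ha hb h
          have hv : ∀ m : ℕ, m ≤ 2 → (if m = 0 then 0 else if m = 1 then k+3 else k+2) ≤ k+3 := by
            intro m hm; split_ifs <;> omega
          have := hUwinj _ _ (hv a ha) (hv b hb) h
          split_ifs at this <;> omega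
        · intro i hi
          try simp only []
          split_ifs <;> first
            | omega
            | exact ‹False›.elim
            | (rw [hUwv 0 (by omega), hUww]; exact hw)
            | (rw [hUww, hUwv (k+2) (by omega)]; exact hA)
      have := L1 2 hp; omega
    -- the main path (v, u_3, ..., u_k, u_0, w) of length k
    have hp : HasPathN A (U (k+2)) w k := by
      refine build_path A Uw k
        (fun m => if m = 0 then k+2 else if m ≤ k-2 then m+2 else if m = k-1 then 0 else k+3) _ _
        (by simp only [if_pos rfl]; exact hUwv (k+2) le_rfl)
        (by simp only [if_neg (show ¬ k = 0 by omega), if_neg (show ¬ k ≤ k-2 by omega),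
              if_neg (show ¬ k = k-1 by omega)]
            exact hUww)
        ?_ ?_
      · intro a b ha hb h
        have hv : ∀ m : ℕ, m ≤ k → (if m = 0 then k+2 else if m ≤ k-2 then m+2 else if m = k-1 then 0 else k+3) ≤ k+3 := by
          intro m hm; split_ifs <;> omega
        have := hUwinj _ _ (hv a ha) (hv b hb) h
        split_ifs at this <;> omega
      · intro i hi
        try simp only []
        split_ifs <;> first
          | omega
          | exact ‹False›.elim
          | (rw [hUwv (k+2) (by omega), hUwv (i+1+2) (by omega)]; exact hS (i+1+2) (by omega))
          | (rw [hUwv (k+2) (by omega), hUwv 0 (by omega)]; exact hS 0 (by omega))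
          | (rw [hUwv (i+2) (by omega), hUwv (i+1+2) (by omega)]; exact harc' (i+2) (by omega))
          | (rw [hUwv (i+2) (by omega), hUwv 0 (by omega), show i+2 = k from by omega]; exact hk0)
          | (rw [hUwv 0 (by omega), hUww]; exact hw)
    exact (hqt _ _ hp).resolve_right hnwv
  rw [← hU0, ← hUv]
  set Nu : Set V := {x | A (U 0) x} with hNu
  set Nv : Set V := {x | A (U (k+2)) x} with hNv
  set T : Set V := U '' {i : ℕ | i ≤ k ∧ i ≠ 1} with hT
  have hTcard : T.ncard = k := by
    have hIoJ : Set.InjOn U {i : ℕ | i ≤ k ∧ i ≠ 1} := by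
      intro a ha b hb h
      exact hUinj a b (le_trans ha.1 (by omega)) (le_trans hb.1 (by omega)) h
    rw [hT, Set.ncard_image_of_injOn hIoJ]
    have e : {i : ℕ | i ≤ k ∧ i ≠ 1} = ↑((Finset.range (k+1)).erase 1) := by
      ext i; simp [Nat.lt_succ_iff]
    rw [e, Set.ncard_coe_finset, Finset.card_erase_of_mem (by simp; omega),
      Finset.card_range]
    omega
  have hsub : Nu ∪ T ⊆ Nv := by
    rintro x (hx | ⟨i, ⟨hik, hi1⟩, rfl⟩)
    · by_cases h1 : x = U 1
      · subst h1; exact hS 1 (by omega)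
      · exact hW x hx h1
    · exact hS i hik
  have hdisj : Disjoint Nu T := by
    rw [Set.disjoint_left]
    rintro x hx ⟨i, ⟨hik, hi1⟩, rfl⟩
    rcases Nat.lt_or_ge i 2 with h2 | h2
    · have : i = 0 := by omega
      subst this
      exact hloop (U 0) hx
    · exact hno0 i h2 (by omega) hx
  have hunion : (Nu ∪ T).ncard = Nu.ncard + T.ncard :=
    Set.ncard_union_eq hdisj (Set.toFinite _) (Set.toFinite _)
  have hle : (Nu ∪ T).ncard ≤ Nv.ncard :=
    Set.ncard_le_ncard hsub (Set.toFinite _)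
  have : outDeg A (U 0) = Nu.ncard := rfl
  have hv : outDeg A (U (k+2)) = Nv.ncard := rfl
  omega
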